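/- arXiv:2101.12377 — 12 statements merged into one kernel-verified Lean document; each statement's English description precedes it below -/
import Mathlib

section
/- Every nearly associative algebra is Lie-admissible: if (A, ·) is an algebra satisfying x·(y·z) = (z·x)·y for all x, y, z, then the commutator bracket [x,y] = x·y − y·x satisfies the Jacobi identity (and is skew-symmetric), so (A, [·,·]) is a Lie algebra. -/
/-- Every nearly associative algebra is Lie-admissible: the commutator bracket
is skew-symmetric and satisfies the Jacobi identity. -/
theorem nearly_associative_lie_admissible
    {K A : Type*} [Field K] [CharZero K] [AddCommGroup A] [Module K A]
    (mul : A →ₗ[K] A →ₗ[K] A)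
    (hna : ∀ x y z : A, mul x (mul y z) = mul (mul z x) y) :
    (∀ x y : A, mul x y - mul y x = -(mul y x - mul x y)) ∧
    (∀ x y z : A,
      (mul x (mul y z - mul z y) - mul (mul y z - mul z y) x) +
      (mul y (mul z x - mul x z) - mul (mul z x - mul x z) y) +
      (mul z (mul x y - mul y x) - mul (mul x y - mul y x) z) = 0) := by
  refine ⟨fun x y => by abel, fun x y z => by simp only [map_sub, LinearMap.sub_apply, hna]; abel⟩
end

section
/- Let (A, ·) be a nearly associative algebra and let the 2-dimensional algebra with basis {e₁, e₂} be defined by e₁·e₁ = α e₂, e₁·e₂ = β e₁ = e₂·e₁, e₂·e₂ = β e₂ for scalars α, β. Then this algebra is nearly associative, i.e., it satisfies x·(y·z) = (z·x)·y for all x, y, z. -/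
/-- The 2-dimensional algebra with e₁·e₁ = α e₂, e₁·e₂ = e₂·e₁ = β e₁,
e₂·e₂ = β e₂ is nearly associative. -/
theorem two_dim_class_one_nearly_associative
    {K A : Type*} [Field K] [CharZero K] [AddCommGroup A] [Module K A]
    (mul : A →ₗ[K] A →ₗ[K] A) (e₁ e₂ : A) (α β : K)
    (hspan : ∀ x : A, ∃ c₁ c₂ : K, x = c₁ • e₁ + c₂ • e₂)
    (h11 : mul e₁ e₁ = α • e₂)
    (h12 : mul e₁ e₂ = β • e₁)
    (h21 : mul e₂ e₁ = β • e₁)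
    (h22 : mul e₂ e₂ = β • e₂) :
    ∀ x y z : A, mul x (mul y z) = mul (mul z x) y := by
  intro x y z
  obtain ⟨a₁, a₂, rfl⟩ := hspan x
  obtain ⟨b₁, b₂, rfl⟩ := hspan y
  obtain ⟨c₁, c₂, rfl⟩ := hspan z
  simp only [map_add, map_smul, LinearMap.add_apply, LinearMap.smul_apply,
    h11, h12, h21, h22, smul_add, smul_smul]
  module
end

section
/- The 2-dimensional algebra with basis {e₁, e₂} and product e₁·e₁ = α e₁ + β e₂, e₁·e₂ = e₂·e₁ = β e₁ + α e₂, e₂·e₂ = α e₁ + β e₂ (α, β scalars) is nearly associative, i.e., satisfies x·(y·z) = (z·x)·y for all x, y, z. -/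
/-- The 2-dimensional algebra with e₁·e₁ = α e₁ + β e₂, e₁·e₂ = e₂·e₁ = β e₁ + α e₂,
e₂·e₂ = α e₁ + β e₂ is nearly associative. -/
theorem two_dim_class_two_nearly_associative
    {K A : Type*} [Field K] [CharZero K] [AddCommGroup A] [Module K A]
    (mul : A →ₗ[K] A →ₗ[K] A) (e₁ e₂ : A) (α β : K)
    (hspan : ∀ x : A, ∃ c₁ c₂ : K, x = c₁ • e₁ + c₂ • e₂)
    (h11 : mul e₁ e₁ = α • e₁ + β • e₂)
    (h12 : mul e₁ e₂ = β • e₁ + α • e₂)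
    (h21 : mul e₂ e₁ = β • e₁ + α • e₂)
    (h22 : mul e₂ e₂ = α • e₁ + β • e₂) :
    ∀ x y z : A, mul x (mul y z) = mul (mul z x) y := by
  intro x y z
  obtain ⟨a₁, a₂, hx⟩ := hspan x
  obtain ⟨b₁, b₂, hy⟩ := hspan y
  obtain ⟨c₁, c₂, hz⟩ := hspan z
  subst hx hy hz
  simp only [map_add, map_smul, LinearMap.add_apply, LinearMap.smul_apply,
    h11, h12, h21, h22, smul_add, smul_smul]
  module
end

section
/- Let (A, ·) be a nearly associative algebra and (l, r, V) a bimodule of A, i.e., linear maps l, r : A → End(V) satisfying l(x)l(y) = r(y)r(x), l(x)r(y) = l(y·x), and r(x)l(y) = r(x·y) for all x, y ∈ A. Then the product (x+u)∗(y+v) = x·y + l(x)v + r(y)u defines a nearly associative algebra structure on A ⊕ V. -/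
/-- The semidirect product of a nearly associative algebra with a bimodule is
a nearly associative algebra. -/
theorem bimodule_semidirect_nearly_associative
    {K A V : Type*} [Field K] [AddCommGroup A] [Module K A]
    [AddCommGroup V] [Module K V]
    (mul : A →ₗ[K] A →ₗ[K] A)
    (hna : ∀ x y z : A, mul x (mul y z) = mul (mul z x) y)
    (l r : A →ₗ[K] Module.End K V)
    (hb1 : ∀ x y : A, l x ∘ₗ l y = r y ∘ₗ r x)
    (hb2 : ∀ x y : A, l x ∘ₗ r y = l (mul y x))
    (hb3 : ∀ x y : A, r x ∘ₗ l y = r (mul x y)) :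
    ∀ X Y Z : A × V,
      (fun (p q : A × V) => ((mul p.1 q.1, l p.1 q.2 + r q.1 p.2) : A × V))
          X ((fun (p q : A × V) => ((mul p.1 q.1, l p.1 q.2 + r q.1 p.2) : A × V)) Y Z) =
      (fun (p q : A × V) => ((mul p.1 q.1, l p.1 q.2 + r q.1 p.2) : A × V))
          ((fun (p q : A × V) => ((mul p.1 q.1, l p.1 q.2 + r q.1 p.2) : A × V)) Z X) Y := by
  intro X Y Z
  obtain ⟨x, u⟩ := X
  obtain ⟨y, v⟩ := Y
  obtain ⟨z, w⟩ := Z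
  simp only [Prod.mk.injEq, map_add]
  constructor
  · exact hna x y z
  · have h1 := congrArg (fun f => f w) (hb1 x y)
    have h2 := congrArg (fun f => f v) (hb2 x z)
    have h3 := congrArg (fun f => f u) (hb3 y z)
    simp only [LinearMap.comp_apply] at h1 h2 h3
    rw [show l x (l y w) = r y (r x w) from h1,
        show l x (r z v) = l (mul z x) v from h2,
        ← show r y (l z u) = r (mul y z) u from h3]
    abel
end

section
/- Let (A, ·) be a nearly associative algebra. Then (L, R, A) is a bimodule of (A, ·), where L(x)y = x·y and R(y)x = x·y; that is, L(x)L(y) = R(y)R(x), L(x)R(y) = L(y·x), and R(x)L(y) = R(x·y) hold for all x, y ∈ A. -/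
/-- (L, R, A) is a bimodule of the nearly associative algebra (A, ·). -/
theorem regular_bimodule_nearly_associative
    {K A : Type*} [Field K] [AddCommGroup A] [Module K A]
    (mul : A →ₗ[K] A →ₗ[K] A)
    (hna : ∀ x y z : A, mul x (mul y z) = mul (mul z x) y) :
    (∀ x y : A, (mul x) ∘ₗ (mul y) = (mul.flip y) ∘ₗ (mul.flip x)) ∧
    (∀ x y : A, (mul x) ∘ₗ (mul.flip y) = mul (mul y x)) ∧
    (∀ x y : A, (mul.flip x) ∘ₗ (mul y) = mul.flip (mul x y)) := by
  refine ⟨fun x y => ?_, fun x y => ?_, fun x y => ?_⟩ <;> ext z <;>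
    simp only [LinearMap.comp_apply, LinearMap.flip_apply]
  · exact hna x y z
  · exact hna x z y
  · exact (hna z x y).symm
end

section
/- Let (A, ·) be a nearly associative algebra and (l, r, V) a bimodule of (A, ·). Then the map x ↦ l(x) − r(x) is a representation of the underlying Lie algebra of A, i.e., (l−r)([x,y]) = (l(x)−r(x))(l(y)−r(y)) − (l(y)−r(y))(l(x)−r(x)) for all x, y ∈ A, where [x,y] = x·y − y·x. -/
/-- For a bimodule (l, r, V) of a nearly associative algebra, l − r is a
representation of the underlying Lie algebra. -/
theorem bimodule_sub_is_lie_representation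
    {K A V : Type*} [Field K] [AddCommGroup A] [Module K A]
    [AddCommGroup V] [Module K V]
    (mul : A →ₗ[K] A →ₗ[K] A)
    (hna : ∀ x y z : A, mul x (mul y z) = mul (mul z x) y)
    (l r : A →ₗ[K] Module.End K V)
    (hb1 : ∀ x y : A, l x ∘ₗ l y = r y ∘ₗ r x)
    (hb2 : ∀ x y : A, l x ∘ₗ r y = l (mul y x))
    (hb3 : ∀ x y : A, r x ∘ₗ l y = r (mul x y)) :
    ∀ x y : A,
      l (mul x y - mul y x) - r (mul x y - mul y x) =
        (l x - r x) ∘ₗ (l y - r y) - (l y - r y) ∘ₗ (l x - r x) := by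
  intro x y
  simp only [map_sub, LinearMap.sub_comp, LinearMap.comp_sub, hb1, hb2, hb3]
  abel
end

section
/- Let (A, ·) be a nearly associative algebra with bimodule (l, r, V), where V is finite-dimensional. If l(x)r(y) = r(y)l(x) for all x, y ∈ A, then (l*, r*, V*) is a bimodule of (A, ·), i.e., l*(x)l*(y) = r*(y)r*(x), l*(x)r*(y) = l*(y·x), and r*(y)l*(x) = r*(y·x) hold. -/
/-- If l(x) and r(y) commute, then (l*, r*, V*) is a bimodule of the nearly
associative algebra (A, ·). -/
theorem commute_implies_dual_bimodule
    {K A V : Type*} [Field K] [AddCommGroup A] [Module K A]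
    [AddCommGroup V] [Module K V] [FiniteDimensional K V]
    (mul : A →ₗ[K] A →ₗ[K] A)
    (hna : ∀ x y z : A, mul x (mul y z) = mul (mul z x) y)
    (l r : A →ₗ[K] Module.End K V)
    (hb1 : ∀ x y : A, l x ∘ₗ l y = r y ∘ₗ r x)
    (hb2 : ∀ x y : A, l x ∘ₗ r y = l (mul y x))
    (hb3 : ∀ x y : A, r x ∘ₗ l y = r (mul x y))
    (hcomm : ∀ x y : A, l x ∘ₗ r y = r y ∘ₗ l x) :
    (∀ x y : A, (l x).dualMap ∘ₗ (l y).dualMap = (r y).dualMap ∘ₗ (r x).dualMap) ∧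
    (∀ x y : A, (l x).dualMap ∘ₗ (r y).dualMap = (l (mul y x)).dualMap) ∧
    (∀ x y : A, (r y).dualMap ∘ₗ (l x).dualMap = (r (mul y x)).dualMap) := by
  refine ⟨fun x y => ?_, fun x y => ?_, fun x y => ?_⟩
  · rw [LinearMap.dualMap_comp_dualMap, LinearMap.dualMap_comp_dualMap, hb1]
  · rw [LinearMap.dualMap_comp_dualMap, ← hcomm, hb2]
  · rw [LinearMap.dualMap_comp_dualMap, hcomm, hb3]
end

section
/- Let (A, ·) and (B, ∘) be nearly associative algebras with bimodules (l_A, r_A, B) of A and (l_B, r_B, A) of B satisfying the six matched-pair compatibility conditions. Then the product (x+a)∗(y+b) = (x·y + l_B(a)y + r_B(b)x) + (a∘b + l_A(x)b + r_A(y)a) makes A ⊕ B a nearly associative algebra. -/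
/-- The matched pair of two nearly associative algebras yields a nearly
associative algebra structure on A ⊕ B. -/
theorem matched_pair_nearly_associative
    {K A B : Type*} [Field K] [AddCommGroup A] [Module K A]
    [AddCommGroup B] [Module K B]
    (mul : A →ₗ[K] A →ₗ[K] A)
    (cir : B →ₗ[K] B →ₗ[K] B)
    (hnaA : ∀ x y z : A, mul x (mul y z) = mul (mul z x) y)
    (hnaB : ∀ a b c : B, cir a (cir b c) = cir (cir c a) b)
    (lA rA : A →ₗ[K] Module.End K B)
    (lB rB : B →ₗ[K] Module.End K A)
    (hbA1 : ∀ x y : A, lA x ∘ₗ lA y = rA y ∘ₗ rA x)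
    (hbA2 : ∀ x y : A, lA x ∘ₗ rA y = lA (mul y x))
    (hbA3 : ∀ x y : A, rA x ∘ₗ lA y = rA (mul x y))
    (hbB1 : ∀ a b : B, lB a ∘ₗ lB b = rB b ∘ₗ rB a)
    (hbB2 : ∀ a b : B, lB a ∘ₗ rB b = lB (cir b a))
    (hbB3 : ∀ a b : B, rB a ∘ₗ lB b = rB (cir a b))
    (hm1 : ∀ (x y : A) (a : B),
      rB (lA x a) y + mul y (rB a x) - mul (lB a y) x - lB (rA y a) x = 0)
    (hm2 : ∀ (x y : A) (a : B),
      rB a (mul x y) - mul y (lB a x) - rB (rA x a) y = 0)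
    (hm3 : ∀ (x y : A) (a : B),
      lB a (mul x y) - mul (rB a y) x - lB (lA y a) x = 0)
    (hm4 : ∀ (x : A) (a b : B),
      rA (lB a x) b + cir b (rA x a) - cir (lA x b) a - lA (rB b x) a = 0)
    (hm5 : ∀ (x : A) (a b : B),
      rA x (cir a b) - cir b (lA x a) - rA (rB a x) b = 0)
    (hm6 : ∀ (x : A) (a b : B),
      lA x (cir a b) - cir (rA x b) a - lA (lB b x) a = 0) :
    let star : A × B → A × B → A × B := fun p q =>
      (mul p.1 q.1 + lB p.2 q.1 + rB q.2 p.1,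
       cir p.2 q.2 + lA p.1 q.2 + rA q.1 p.2)
    ∀ X Y Z : A × B, star X (star Y Z) = star (star Z X) Y := by
  intro star X Y Z
  obtain ⟨x, a⟩ := X
  obtain ⟨y, b⟩ := Y
  obtain ⟨z, c⟩ := Z
  simp only [star, Prod.mk.injEq, map_add, LinearMap.add_apply]
  constructor
  · -- first component
    have pw1 := hnaA x y z
    have pw2 := LinearMap.congr_fun (hbB1 a b) z
    have pw3 := LinearMap.congr_fun (hbB2 a c) y
    have pw4 := LinearMap.congr_fun (hbB3 b c) x
    simp only [LinearMap.comp_apply] at pw2 pw3 pw4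
    have h1 : rB (lA y c) x
        = mul (lB c x) y + lB (rA x c) y - mul x (rB c y) := by
      apply eq_of_sub_eq_zero
      rw [← hm1 y x c]; abel
    have h2 : rB b (mul z x) = mul x (lB b z) + rB (rA z b) x := by
      apply eq_of_sub_eq_zero
      rw [← hm2 z x b]; abel
    have h3 : lB a (mul y z) = mul (rB a z) y + lB (lA z a) y := by
      apply eq_of_sub_eq_zero
      rw [← hm3 y z a]; abel
    rw [pw1, pw2, pw3, pw4, h1, h2, h3]; abel
  · -- second component
    have pw1 := hnaB a b c
    have pw2 := LinearMap.congr_fun (hbA1 x y) c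
    have pw3 := LinearMap.congr_fun (hbA2 x z) b
    have pw4 := LinearMap.congr_fun (hbA3 y z) a
    simp only [LinearMap.comp_apply] at pw2 pw3 pw4
    have h4 : rA (lB b z) a
        = cir (lA z a) b + lA (rB a z) b - cir a (rA z b) := by
      apply eq_of_sub_eq_zero
      rw [← hm4 z b a]; abel
    have h5 : rA y (cir c a) = cir a (lA y c) + rA (rB c y) a := by
      apply eq_of_sub_eq_zero
      rw [← hm5 y c a]; abel
    have h6 : lA x (cir b c) = cir (rA x c) b + lA (lB c x) b := by
      apply eq_of_sub_eq_zero
      rw [← hm6 x b c]; abel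
    rw [pw1, pw2, pw3, pw4, h4, h5, h6]; abel
end

section
/- Every nearly Hom-associative algebra is Hom-Lie admissible: if (A, ∗, α) satisfies α(x)∗(y∗z) = (z∗x)∗α(y) for all x, y, z, then the commutator [x,y] = x∗y − y∗x is skew-symmetric and satisfies the Hom-Jacobi identity [α(x),[y,z]] + [α(y),[z,x]] + [α(z),[x,y]] = 0, so (A, [·,·], α) is a Hom-Lie algebra. -/
/-- Every nearly Hom-associative algebra is Hom-Lie admissible. -/
theorem nearly_hom_associative_hom_lie_admissible
    {K A : Type*} [Field K] [AddCommGroup A] [Module K A]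
    (mul : A →ₗ[K] A →ₗ[K] A) (α : A →ₗ[K] A)
    (hna : ∀ x y z : A, mul (α x) (mul y z) = mul (mul z x) (α y)) :
    (∀ x y : A, mul x y - mul y x = -(mul y x - mul x y)) ∧
    (∀ x y z : A,
      (mul (α x) (mul y z - mul z y) - mul (mul y z - mul z y) (α x)) +
      (mul (α y) (mul z x - mul x z) - mul (mul z x - mul x z) (α y)) +
      (mul (α z) (mul x y - mul y x) - mul (mul x y - mul y x) (α z)) = 0) := by
  refine ⟨fun x y => by abel, fun x y z => ?_⟩
  simp only [map_sub, LinearMap.sub_apply, hna]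
  abel
end

section
/- Let (A, ·, α) be a nearly Hom-associative algebra and (l, r, V, φ) a bimodule. Then the map x ↦ l(x) − r(x) is a representation of the underlying Hom-Lie algebra (A, [·,·], α) with respect to φ: it satisfies (l−r)(α(x))∘φ = φ∘(l−r)(x) and (l−r)([x,y])∘φ = (l−r)(α(x))∘(l−r)(y) − (l−r)(α(y))∘(l−r)(x) for all x, y ∈ A, where [x,y] = x·y − y·x. -/
/-- For a bimodule (l, r, V, φ) of a nearly Hom-associative algebra, l − r is a
representation of the underlying Hom-Lie algebra with respect to φ. -/
theorem hom_bimodule_sub_is_hom_lie_representation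
    {K A V : Type*} [Field K] [AddCommGroup A] [Module K A]
    [AddCommGroup V] [Module K V]
    (mul : A →ₗ[K] A →ₗ[K] A) (α : A →ₗ[K] A)
    (hna : ∀ x y z : A, mul (α x) (mul y z) = mul (mul z x) (α y))
    (l r : A →ₗ[K] Module.End K V) (φ : Module.End K V)
    (hb0l : ∀ x : A, φ ∘ₗ l x = l (α x) ∘ₗ φ)
    (hb0r : ∀ x : A, φ ∘ₗ r x = r (α x) ∘ₗ φ)
    (hb1 : ∀ x y : A, l (α x) ∘ₗ l y = r (α y) ∘ₗ r x)
    (hb2 : ∀ x y : A, l (α x) ∘ₗ r y = l (mul y x) ∘ₗ φ)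
    (hb3 : ∀ x y : A, r (α x) ∘ₗ l y = r (mul x y) ∘ₗ φ) :
    (∀ x : A, (l (α x) - r (α x)) ∘ₗ φ = φ ∘ₗ (l x - r x)) ∧
    (∀ x y : A,
      (l (mul x y - mul y x) - r (mul x y - mul y x)) ∘ₗ φ =
        (l (α x) - r (α x)) ∘ₗ (l y - r y) - (l (α y) - r (α y)) ∘ₗ (l x - r x)) := by
  constructor
  · intro x
    rw [LinearMap.sub_comp, LinearMap.comp_sub, ← hb0l, ← hb0r]
  · intro x y
    simp only [map_sub, LinearMap.sub_comp, LinearMap.comp_sub, ← hb2, ← hb3,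
      hb1 x y, hb1 y x]
    abel
end

section
/- Let (A, ∗, α) be a nearly Hom-associative algebra and (l, r, V, φ) a bimodule of A. Then the product (x+u)⋆(y+v) = x∗y + l(x)v + r(y)u together with the map α⊕φ defines a nearly Hom-associative algebra structure on A ⊕ V, i.e., (α⊕φ)(X)⋆(Y⋆Z) = (Z⋆X)⋆(α⊕φ)(Y) for all X, Y, Z ∈ A ⊕ V. -/
/-- The semidirect product of a nearly Hom-associative algebra with a bimodule
(l, r, V, φ) is a nearly Hom-associative algebra for α ⊕ φ. -/
theorem hom_bimodule_semidirect_nearly_hom_associative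
    {K A V : Type*} [Field K] [AddCommGroup A] [Module K A]
    [AddCommGroup V] [Module K V]
    (mul : A →ₗ[K] A →ₗ[K] A) (α : A →ₗ[K] A)
    (hna : ∀ x y z : A, mul (α x) (mul y z) = mul (mul z x) (α y))
    (l r : A →ₗ[K] Module.End K V) (φ : Module.End K V)
    (hb0l : ∀ x : A, φ ∘ₗ l x = l (α x) ∘ₗ φ)
    (hb0r : ∀ x : A, φ ∘ₗ r x = r (α x) ∘ₗ φ)
    (hb1 : ∀ x y : A, l (α x) ∘ₗ l y = r (α y) ∘ₗ r x)
    (hb2 : ∀ x y : A, l (α x) ∘ₗ r y = l (mul y x) ∘ₗ φ)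
    (hb3 : ∀ x y : A, r (α x) ∘ₗ l y = r (mul x y) ∘ₗ φ) :
    let star : A × V → A × V → A × V := fun p q =>
      (mul p.1 q.1, l p.1 q.2 + r q.1 p.2)
    let αφ : A × V → A × V := fun p => (α p.1, φ p.2)
    ∀ X Y Z : A × V, star (αφ X) (star Y Z) = star (star Z X) (αφ Y) := by
  intro star αφ X Y Z
  have h0l := fun x v => congrFun (congrArg DFunLike.coe (hb0l x)) v
  have h0r := fun x v => congrFun (congrArg DFunLike.coe (hb0r x)) v
  have h1 := fun x y v => congrFun (congrArg DFunLike.coe (hb1 x y)) v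
  have h2 := fun x y v => congrFun (congrArg DFunLike.coe (hb2 x y)) v
  have h3 := fun x y v => congrFun (congrArg DFunLike.coe (hb3 x y)) v
  simp only [LinearMap.coe_comp, Function.comp_apply] at h0l h0r h1 h2 h3
  simp only [star, αφ, Prod.mk.injEq, map_add, LinearMap.add_apply]
  refine ⟨hna _ _ _, ?_⟩
  rw [h1, h2, h3]
  abel
end

section
/- Let (l, r, V) be a bimodule of a nearly associative algebra (A, ·). Then the bracket [x+u, y+v] = [x,y] + (l(x)−r(x))v − (l(y)−r(y))u, where [x,y] = x·y − y·x, defines a Lie algebra structure on A ⊕ V. -/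
/-- The commutator of the semidirect product of a nearly associative algebra with
a bimodule defines a Lie algebra structure on A ⊕ V. -/
theorem bimodule_semidirect_lie_structure
    {K A V : Type*} [Field K] [AddCommGroup A] [Module K A]
    [AddCommGroup V] [Module K V]
    (mul : A →ₗ[K] A →ₗ[K] A)
    (hna : ∀ x y z : A, mul x (mul y z) = mul (mul z x) y)
    (l r : A →ₗ[K] Module.End K V)
    (hb1 : ∀ x y : A, l x ∘ₗ l y = r y ∘ₗ r x)
    (hb2 : ∀ x y : A, l x ∘ₗ r y = l (mul y x))
    (hb3 : ∀ x y : A, r x ∘ₗ l y = r (mul x y)) :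
    let bracket : A × V → A × V → A × V := fun p q =>
      (mul p.1 q.1 - mul q.1 p.1,
       (l p.1 - r p.1) q.2 - (l q.1 - r q.1) p.2)
    (∀ X Y : A × V, bracket X Y = -bracket Y X) ∧
    (∀ X Y Z : A × V,
      bracket X (bracket Y Z) + bracket Y (bracket Z X) + bracket Z (bracket X Y) = 0) := by
  intro bracket
  have hb1' : ∀ (x y : A) (v : V), l x (l y v) = r y (r x v) := fun x y v =>
    congrFun (congrArg DFunLike.coe (hb1 x y)) v
  have hb2' : ∀ (x y : A) (v : V), l x (r y v) = l (mul y x) v := fun x y v =>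
    congrFun (congrArg DFunLike.coe (hb2 x y)) v
  have hb3' : ∀ (x y : A) (v : V), r x (l y v) = r (mul x y) v := fun x y v =>
    congrFun (congrArg DFunLike.coe (hb3 x y)) v
  constructor
  · rintro ⟨x, u⟩ ⟨y, v⟩
    simp only [bracket, Prod.neg_mk, Prod.mk.injEq]
    constructor <;> abel
  · rintro ⟨x, u⟩ ⟨y, v⟩ ⟨z, w⟩
    simp only [bracket, Prod.mk_add_mk, Prod.mk_eq_zero]
    constructor
    · simp only [map_sub, LinearMap.sub_apply]
      simp only [hna]
      abel
    · simp only [map_sub, LinearMap.sub_apply, LinearMap.map_sub]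
      simp only [hb1', hb2', hb3']
      abel
end
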